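/- For every complex number z with -1 < Re(z) < 0, the limit as s → 0⁺ of ( ∫_{s}^{∞} t^{z-1} e^{-t} dt + s^{z}/z ) equals Γ(z), where Γ is the complex Gamma function and t^{z-1}, s^{z} denote principal complex powers of positive reals. -/

import Mathlib

open MeasureTheory

open Set Filter Complex

lemma aux_cont (c : ℂ) {s : ℝ} (hs : 0 < s) :
    ContinuousOn (fun t : ℝ => (t : ℂ) ^ c * Complex.exp (-((t : ℝ) : ℂ))) (Set.Ioi s) := by
  apply ContinuousOn.mul
  · intro x hx
    have hx' : (0:ℝ) < x := hs.trans hx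
    exact ((continuousAt_cpow_const (Complex.ofReal_mem_slitPlane.2 hx')).comp
      Complex.continuous_ofReal.continuousAt).continuousWithinAt
  · exact (Complex.continuous_exp.comp (Complex.continuous_ofReal.neg)).continuousOn

lemma aux_integrable (c : ℂ) (hc : c.re ≤ 0) {s : ℝ} (hs : 0 < s) :
    IntegrableOn (fun t : ℝ => (t : ℂ) ^ c * Complex.exp (-((t : ℝ) : ℂ))) (Set.Ioi s) := by
  have hg : IntegrableOn (fun t : ℝ => s ^ c.re * Real.exp (-t)) (Set.Ioi s) := by
    have h := (exp_neg_integrableOn_Ioi s (b := 1) one_pos).const_mul (s ^ c.re)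
    simp at h
    exact h
  refine hg.mono' ((aux_cont c hs).aestronglyMeasurable measurableSet_Ioi) ?_
  filter_upwards [ae_restrict_mem measurableSet_Ioi] with t ht
  have ht0 : (0:ℝ) < t := hs.trans ht
  rw [norm_mul,
    Complex.norm_cpow_eq_rpow_re_of_pos ht0, Complex.norm_exp]
  simp only [Complex.neg_re, Complex.ofReal_re]
  exact mul_le_mul_of_nonneg_right (Real.rpow_le_rpow_of_nonpos hs (le_of_lt ht) hc)
    (Real.exp_nonneg _)

/-- Integration by parts identity. -/
lemma aux_ibp (z : ℂ) (h1 : -1 < z.re) (h2 : z.re < 0) {s : ℝ} (hs : 0 < s) :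
    z * ∫ t in Set.Ioi s, (t : ℂ) ^ (z - 1) * Complex.exp (-((t : ℝ) : ℂ)) =
      (∫ t in Set.Ioi s, (t : ℂ) ^ z * Complex.exp (-((t : ℝ) : ℂ)))
        - (s : ℂ) ^ z * Complex.exp (-((s : ℝ) : ℂ)) := by
  have i1 := aux_integrable (z-1) (by simp; linarith) hs
  have i2 := aux_integrable z (le_of_lt h2) hs
  have key : ∫ t in Set.Ioi s,
      (z * ((t:ℂ) ^ (z-1) * Complex.exp (-((t:ℝ):ℂ))) - (t:ℂ) ^ z * Complex.exp (-((t:ℝ):ℂ)))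
      = 0 - (s : ℂ) ^ z * Complex.exp (-((s : ℝ) : ℂ)) := by
    apply integral_Ioi_of_hasDerivAt_of_tendsto'
      (f := fun t : ℝ => (t : ℂ) ^ z * Complex.exp (-((t : ℝ) : ℂ)))
    · intro x hx
      have hx0 : (0:ℝ) < x := lt_of_lt_of_le hs hx
      have d1 : HasDerivAt (fun t : ℝ => (t : ℂ) ^ z) (z * (x:ℂ) ^ (z-1)) x := by
        have := (((hasDerivAt_id ((x:ℝ):ℂ)).cpow_const (c := z)
          (Complex.ofReal_mem_slitPlane.2 hx0)).comp_ofReal (z := x))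
        simpa using this
      have d2 : HasDerivAt (fun t : ℝ => Complex.exp (-((t:ℝ):ℂ)))
          (-Complex.exp (-((x:ℝ):ℂ))) x := by
        have := (((Complex.hasDerivAt_exp (-((x:ℝ):ℂ))).comp _
          (hasDerivAt_neg ((x:ℝ):ℂ))).comp_ofReal (z := x))
        simpa [mul_comm] using this
      have := d1.mul d2
      refine this.congr_deriv ?_
      ring
    · have h3 := (i1.const_mul z).sub i2
      refine IntegrableOn.congr_fun h3 ?_ measurableSet_Ioi
      intro x hx
      simp only [Pi.sub_apply]
    · refine squeeze_zero_norm' ?_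
        (tendsto_rpow_mul_exp_neg_mul_atTop_nhds_zero z.re 1 one_pos)
      filter_upwards [eventually_gt_atTop (0:ℝ)] with x hx0
      rw [norm_mul,
        Complex.norm_cpow_eq_rpow_re_of_pos hx0, Complex.norm_exp]
      simp
  rw [integral_sub (i1.const_mul z) i2, MeasureTheory.integral_const_mul, zero_sub] at key
  linear_combination key

lemma aux_I0 (z : ℂ) (h1 : -1 < z.re) :
    IntegrableOn (fun t : ℝ => (t : ℂ) ^ z * Complex.exp (-((t : ℝ) : ℂ))) (Set.Ioi (0:ℝ)) := by
  have h : (0:ℝ) < (z+1).re := by simp; linarith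
  refine (Complex.GammaIntegral_convergent h).congr_fun ?_ measurableSet_Ioi
  intro x hx
  simp only [add_sub_cancel_right]
  rw [Complex.ofReal_exp, Complex.ofReal_neg, mul_comm]

lemma aux_rpow_tendsto (r : ℝ) (hr : 0 < r) :
    Filter.Tendsto (fun s : ℝ => s ^ r) (nhdsWithin 0 (Set.Ioi 0)) (nhds 0) := by
  have := (Real.continuousAt_rpow_const 0 r (Or.inr hr.le)).tendsto
  rw [Real.zero_rpow hr.ne'] at this
  exact this.mono_left nhdsWithin_le_nhds

lemma aux_T1 (z : ℂ) (h1 : -1 < z.re) (h2 : z.re < 0) :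
    Filter.Tendsto (fun s : ℝ => ∫ t in Set.Ioi s, (t : ℂ) ^ z * Complex.exp (-((t : ℝ) : ℂ)))
      (nhdsWithin 0 (Set.Ioi 0))
      (nhds (∫ t in Set.Ioi (0:ℝ), (t : ℂ) ^ z * Complex.exp (-((t : ℝ) : ℂ)))) := by
  set f : ℝ → ℂ := fun t => (t : ℂ) ^ z * Complex.exp (-((t : ℝ) : ℂ)) with hf
  have hint := aux_I0 z h1
  have hsmall : Filter.Tendsto (fun s : ℝ => ∫ t in Set.Ioc (0:ℝ) s, f t)
      (nhdsWithin 0 (Set.Ioi 0)) (nhds 0) := by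
    refine squeeze_zero_norm' ?_
      (by simpa using (aux_rpow_tendsto (z.re+1) (by linarith)).div_const (z.re+1))
    filter_upwards [self_mem_nhdsWithin] with s hs
    have hs0 : (0:ℝ) < s := hs
    have hb : ‖∫ t in Set.Ioc (0:ℝ) s, f t‖ ≤ ∫ t in Set.Ioc (0:ℝ) s, t ^ z.re := by
      apply norm_integral_le_of_norm_le
      · exact (intervalIntegral.intervalIntegrable_rpow' (by linarith) (a := 0) (b := s)).1
      · filter_upwards [ae_restrict_mem measurableSet_Ioc] with t ht
        rw [norm_mul,
          Complex.norm_cpow_eq_rpow_re_of_pos ht.1, Complex.norm_exp]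
        simp only [Complex.neg_re, Complex.ofReal_re]
        calc t ^ z.re * Real.exp (-t) ≤ t ^ z.re * 1 :=
              mul_le_mul_of_nonneg_left (Real.exp_le_one_iff.mpr (neg_nonpos.mpr ht.1.le))
                (Real.rpow_nonneg ht.1.le _)
          _ = t ^ z.re := mul_one _
    refine hb.trans ?_
    rw [← intervalIntegral.integral_of_le hs0.le,
      integral_rpow (Or.inl (by linarith)),
      Real.zero_rpow (by linarith), sub_zero]
  have hev : ∀ᶠ s in nhdsWithin (0:ℝ) (Set.Ioi 0),
      (∫ t in Set.Ioi (0:ℝ), f t) - ∫ t in Set.Ioc (0:ℝ) s, f t = ∫ t in Set.Ioi s, f t := by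
    filter_upwards [self_mem_nhdsWithin] with s hs
    have hs0 : (0:ℝ) < s := hs
    rw [← Set.Ioc_union_Ioi_eq_Ioi hs0.le,
      setIntegral_union (Set.Ioc_disjoint_Ioi le_rfl) measurableSet_Ioi
        (hint.mono_set Set.Ioc_subset_Ioi_self)
        (hint.mono_set (Set.Ioi_subset_Ioi hs0.le))]
    ring
  have := (tendsto_const_nhds.sub hsmall).congr' hev
  simpa using this

lemma aux_T2 (z : ℂ) (h1 : -1 < z.re) (h2 : z.re < 0) :
    Filter.Tendsto (fun s : ℝ => (s : ℂ) ^ z * (1 - Complex.exp (-((s : ℝ) : ℂ))))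
      (nhdsWithin 0 (Set.Ioi 0)) (nhds 0) := by
  refine squeeze_zero_norm' ?_ (aux_rpow_tendsto (z.re+1) (by linarith))
  filter_upwards [self_mem_nhdsWithin] with s hs
  have hs0 : (0:ℝ) < s := hs
  have h1e : (1 : ℂ) - Complex.exp (-((s:ℝ):ℂ)) = ((1 - Real.exp (-s) : ℝ) : ℂ) := by
    push_cast [Complex.ofReal_exp]
    ring
  rw [norm_mul, h1e, Complex.norm_real, Real.norm_eq_abs,
    Complex.norm_cpow_eq_rpow_re_of_pos hs0]
  have hle : |1 - Real.exp (-s)| ≤ s := by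
    rw [_root_.abs_of_nonneg (by linarith [Real.exp_le_one_iff.2 (by linarith : -s ≤ 0)])]
    have := Real.add_one_le_exp (-s)
    linarith
  calc s ^ z.re * |1 - Real.exp (-s)| ≤ s ^ z.re * s :=
        mul_le_mul_of_nonneg_left hle (Real.rpow_nonneg hs0.le _)
    _ = s ^ (z.re + 1) := by rw [Real.rpow_add_one hs0.ne']


/-- For `-1 < Re z < 0`, `Γ(z, s) + s^z / z → Γ(z)` as `s → 0⁺`, where
`Γ(z,s) = ∫_s^∞ t^{z-1} e^{-t} dt` is the upper incomplete Gamma function. -/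
theorem stmt1 (z : ℂ) (h1 : -1 < z.re) (h2 : z.re < 0) :
    Filter.Tendsto
      (fun s : ℝ =>
        (∫ t in Set.Ioi s, (t : ℂ) ^ (z - 1) * Complex.exp (-((t : ℝ) : ℂ))) + (s : ℂ) ^ z / z)
      (nhdsWithin 0 (Set.Ioi 0)) (nhds (Complex.Gamma z)) := by
  have hz : z ≠ 0 := by
    intro h
    rw [h] at h2
    simp at h2
  have hT := ((aux_T1 z h1 h2).add (aux_T2 z h1 h2)).div_const z
  have hval : ((∫ t in Set.Ioi (0:ℝ), (t : ℂ) ^ z * Complex.exp (-((t : ℝ) : ℂ))) + 0) / z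
      = Complex.Gamma z := by
    have hI : (∫ t in Set.Ioi (0:ℝ), (t : ℂ) ^ z * Complex.exp (-((t : ℝ) : ℂ)))
        = Complex.GammaIntegral (z+1) := by
      rw [Complex.GammaIntegral]
      refine setIntegral_congr_fun measurableSet_Ioi fun x hx => ?_
      rw [add_sub_cancel_right, Complex.ofReal_exp, Complex.ofReal_neg, mul_comm]
    rw [add_zero, hI, ← Complex.Gamma_eq_integral (by simp; linarith),
      Complex.Gamma_add_one z hz, mul_div_cancel_left₀ _ hz]
  rw [hval] at hT
  refine hT.congr' ?_
  filter_upwards [self_mem_nhdsWithin] with s hs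
  have hs0 : (0:ℝ) < s := hs
  have hibp := aux_ibp z h1 h2 hs0
  field_simp
  linear_combination -hibp
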